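/- Let X be an Archimedean vector lattice with the σ-property (every countable subset lies in a principal ideal). Then the uniform adherence of X in its Dedekind completion X^δ equals the uniform closure of X in X^δ. -/

import Mathlib

open Filter Set

section Defs

variable (X : Type*) [Lattice X] [AddCommGroup X] [Module ℝ X]

/-- Archimedean property for a vector lattice. -/
def VLArchimedean : Prop := ∀ x y : X, (∀ n : ℕ, n • x ≤ y) → x ≤ 0

variable {X}

/-- `Y` is a sublattice: a linear subspace closed under `⊔`. -/
def IsVLSublattice (Y : Set X) : Prop :=
  (0 : X) ∈ Y ∧ (∀ a ∈ Y, ∀ b ∈ Y, a + b ∈ Y) ∧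
    (∀ (c : ℝ), ∀ a ∈ Y, c • a ∈ Y) ∧ (∀ a ∈ Y, ∀ b ∈ Y, a ⊔ b ∈ Y)

/-- `Y` is majorizing in `X`. -/
def Majorizing (Y : Set X) : Prop := ∀ x : X, 0 ≤ x → ∃ y ∈ Y, x ≤ y

/-- Relative uniform convergence of a sequence with regulator `e`. -/
def RUTendsto (x : ℕ → X) (l e : X) : Prop :=
  0 ≤ e ∧ ∀ ε : ℝ, 0 < ε → ∃ N, ∀ n ≥ N, |x n - l| ≤ ε • e

/-- Relative uniform Cauchy sequence with regulator `e`. -/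
def RUCauchy (x : ℕ → X) (e : X) : Prop :=
  0 ≤ e ∧ ∀ ε : ℝ, 0 < ε → ∃ N, ∀ n ≥ N, ∀ m ≥ N, |x n - x m| ≤ ε • e

/-- Relative uniform convergence of a net with regulator `e`. -/
def RUTendstoNet {ι : Type*} [Preorder ι] (x : ι → X) (l e : X) : Prop :=
  0 ≤ e ∧ ∀ ε : ℝ, 0 < ε → ∃ α₀, ∀ α ≥ α₀, |x α - l| ≤ ε • e

/-- Relative uniform Cauchy net with regulator `e`. -/
def RUCauchyNet {ι : Type*} [Preorder ι] (x : ι → X) (e : X) : Prop :=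
  0 ≤ e ∧ ∀ ε : ℝ, 0 < ε → ∃ α₀, ∀ α ≥ α₀, ∀ β ≥ α₀, |x α - x β| ≤ ε • e

/-- Uniform adherence of a set: all relative uniform limits of sequences from `A`. -/
def uAdh (A : Set X) : Set X :=
  {l | ∃ x : ℕ → X, (∀ n, x n ∈ A) ∧ ∃ e, RUTendsto x l e}

/-- `A` is uniformly closed. -/
def RUClosed (A : Set X) : Prop := uAdh A ⊆ A

/-- Uniform closure: the least uniformly closed superset of `A`. -/
def uClosure (A : Set X) : Set X := ⋂₀ {B : Set X | A ⊆ B ∧ RUClosed B}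

variable (X)

/-- Relative uniform completeness (for sequences). -/
def RUComplete : Prop :=
  ∀ x : ℕ → X, (∃ e, RUCauchy x e) → ∃ l e, RUTendsto x l e

variable {X}

/-- Relative uniform completeness of a sublattice `Y` (regulators taken in `Y`). -/
def RUCompleteIn (Y : Set X) : Prop :=
  ∀ x : ℕ → X, (∀ n, x n ∈ Y) → (∃ e ∈ Y, RUCauchy x e) →
    ∃ l ∈ Y, ∃ e ∈ Y, RUTendsto x l e

/-- An (order) ideal of a vector lattice: a solid linear subspace. -/
def IsVLIdeal (I : Set X) : Prop :=
  (0 : X) ∈ I ∧ (∀ a ∈ I, ∀ b ∈ I, a + b ∈ I) ∧ (∀ (c : ℝ), ∀ a ∈ I, c • a ∈ I) ∧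
    ∀ x : X, ∀ y ∈ I, |x| ≤ |y| → x ∈ I

/-- The ideal generated by a set. -/
def idealGen (Y : Set X) : Set X := ⋂₀ {I : Set X | Y ⊆ I ∧ IsVLIdeal I}

/-- `B` is a projection band: an ideal along which the space decomposes. -/
def IsProjectionBand (B : Set X) : Prop :=
  IsVLIdeal B ∧ ∀ x : X, ∃ b ∈ B, ∃ d : X, (∀ y ∈ B, |d| ⊓ |y| = 0) ∧ x = b + d

end Defs
theorem sigma_property_implies_adherence_eq_closure_in_dedekind_completion
    {D : Type*} [Lattice D] [AddCommGroup D] [Module ℝ D]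
    [CovariantClass D D (· + ·) (· ≤ ·)] [PosSMulMono ℝ D]
    (harch : VLArchimedean D)
    (hD : ∀ S : Set D, S.Nonempty → BddAbove S → ∃ a, IsLUB S a)
    {X : Set D} (hX : IsVLSublattice X) (hmaj : Majorizing X)
    (hdense : ∀ d : D, 0 < d → ∃ x ∈ X, 0 < x ∧ x ≤ d)
    (hsigma : ∀ f : ℕ → D, (∀ n, f n ∈ X) →
      ∃ u ∈ X, 0 ≤ u ∧ ∀ n, ∃ c : ℝ, |f n| ≤ c • u) :
    uAdh X = uClosure X := by
  have key : ∀ {c c' : ℝ} {u : D}, c ≤ c' → 0 ≤ u → c • u ≤ c' • u := by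
    intro c c' u h hu
    have h0 : 0 ≤ (c' - c) • u := by
      have := smul_le_smul_of_nonneg_left hu (sub_nonneg.2 h)
      simpa using this
    have := add_le_add (le_refl (c • u)) h0
    calc c • u = c • u + 0 := by rw [add_zero]
      _ ≤ c • u + (c' - c) • u := this
      _ = c' • u := by rw [← add_smul]; ring_nf
  apply Set.Subset.antisymm
  · -- uAdh X ⊆ uClosure X
    intro l hl B hB
    obtain ⟨x, hx, e, he⟩ := hl
    exact hB.2 ⟨x, fun n => hB.1 (hx n), e, he⟩
  · -- uClosure X ⊆ uAdh X
    apply Set.sInter_subset_of_mem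
    constructor
    · intro x hx
      refine ⟨fun _ => x, fun _ => hx, 0, le_refl 0, fun ε hε => ⟨0, fun n _ => by simp⟩⟩
    · -- RUClosed (uAdh X)
      intro l hl
      obtain ⟨y, hy, e, he0, he⟩ := hl
      choose x hxX e' hconv using hy
      have hek0 : ∀ k, 0 ≤ e' k := fun k => (hconv k).1
      choose u huX hue using fun k => hmaj (e' k) (hek0 k)
      obtain ⟨U, hUX, hU0, hc⟩ := hsigma u huX
      choose c hcle using hc
      have hu0 : ∀ k, 0 ≤ u k := fun k => le_trans (hek0 k) (hue k)
      set c' : ℕ → ℝ := fun k => max (c k) 1 with hc'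
      have hc'pos : ∀ k, 0 < c' k := fun k => lt_of_lt_of_le one_pos (le_max_right _ _)
      have hukU : ∀ k, u k ≤ c' k • U := by
        intro k
        calc u k = |u k| := (abs_of_nonneg (hu0 k)).symm
          _ ≤ c k • U := hcle k
          _ ≤ c' k • U := key (le_max_left _ _) hU0
      -- choose z k ∈ X close to y k
      have hz : ∀ k : ℕ, ∃ z ∈ X, |z - y k| ≤ (1 / ((k : ℝ) + 1)) • U := by
        intro k
        have hεpos : (0:ℝ) < 1 / (((k:ℝ) + 1) * c' k) := by
          apply div_pos one_pos
          positivity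
        obtain ⟨N, hN⟩ := (hconv k).2 _ hεpos
        refine ⟨x k N, hxX k N, ?_⟩
        have h1 : |x k N - y k| ≤ (1 / (((k:ℝ) + 1) * c' k)) • e' k := hN N (le_refl N)
        have h2 : (1 / (((k:ℝ) + 1) * c' k)) • e' k ≤ (1 / (((k:ℝ) + 1) * c' k)) • u k :=
          smul_le_smul_of_nonneg_left (hue k) (le_of_lt hεpos)
        have h3 : (1 / (((k:ℝ) + 1) * c' k)) • u k ≤ (1 / (((k:ℝ) + 1) * c' k)) • (c' k • U) :=
          smul_le_smul_of_nonneg_left (hukU k) (le_of_lt hεpos)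
        have h4 : (1 / (((k:ℝ) + 1) * c' k)) • (c' k • U) = (1 / ((k : ℝ) + 1)) • U := by
          rw [smul_smul]
          congr 1
          rw [one_div, one_div, mul_inv, mul_assoc, inv_mul_cancel₀ (hc'pos k).ne', mul_one]
        exact le_trans h1 (le_trans h2 (le_trans h3 (le_of_eq h4)))
      choose z hzX hzy using hz
      refine ⟨z, hzX, U + e, add_nonneg hU0 he0, ?_⟩
      intro ε hε
      obtain ⟨N₁, hN₁⟩ := he ε hε
      obtain ⟨K, hK⟩ := exists_nat_ge (1 / ε)
      refine ⟨max N₁ K, fun k hk => ?_⟩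
      have hkN₁ : N₁ ≤ k := le_trans (le_max_left _ _) hk
      have hkK : K ≤ k := le_trans (le_max_right _ _) hk
      have hfrac : 1 / ((k : ℝ) + 1) ≤ ε := by
        have h1 : (1:ℝ) / ε ≤ (k : ℝ) + 1 := by
          calc (1:ℝ)/ε ≤ (K:ℝ) := hK
            _ ≤ (k:ℝ) := by exact_mod_cast hkK
            _ ≤ (k:ℝ) + 1 := by linarith
        have h2 : 1 / ((k : ℝ) + 1) ≤ 1 / (1 / ε) :=
          one_div_le_one_div_of_le (by positivity) h1
        rwa [one_div_one_div] at h2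
      have t1 : |z k - y k| ≤ ε • U :=
        le_trans (hzy k) (key hfrac hU0)
      have t2 : |y k - l| ≤ ε • e := hN₁ k hkN₁
      calc |z k - l| = |(z k - y k) + (y k - l)| := by rw [sub_add_sub_cancel]
        _ ≤ |z k - y k| + |y k - l| := abs_add_le _ _
        _ ≤ ε • U + ε • e := add_le_add t1 t2
        _ = ε • (U + e) := (smul_add ε U e).symm
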